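/- Let E be a finite-dimensional real inner product space (e.g. E = EuclideanSpace \mathbb{R} (Fin d) with d \ge 1), and let C be a nonempty convex subset of the open unit ball Metric.ball 0 1 in E. Then the unit sphere Metric.sphere 0 1 is a deformation retract of Metric.closedBall 0 1 \setminus C; in particular, the subspace Metric.closedBall 0 1 \setminus C is homotopy equivalent to Metric.sphere 0 1. -/

import Mathlib

open Metric Real
open scoped RealInnerProductSpace

noncomputable def retrScale {E : Type*} [NormedAddCommGroup E] [InnerProductSpace ℝ E]
    (c x : E) : ℝ :=
  (-(⟪c, x - c⟫) + Real.sqrt (⟪c, x - c⟫ ^ 2 + ‖x - c‖ ^ 2 * (1 - ‖c‖ ^ 2))) / ‖x - c‖ ^ 2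

section
set_option linter.unusedSectionVars false
variable {E : Type*} [NormedAddCommGroup E] [InnerProductSpace ℝ E] {c x : E}

lemma retr_normsq (l : ℝ) :
    ‖c + l • (x - c)‖ ^ 2 = ‖x - c‖ ^ 2 * l ^ 2 + 2 * ⟪c, x - c⟫ * l + ‖c‖ ^ 2 := by
  rw [norm_add_sq_real, real_inner_smul_right, norm_smul, Real.norm_eq_abs, mul_pow, sq_abs]
  ring

lemma retr_A_pos (hx : x ≠ c) : 0 < ‖x - c‖ ^ 2 := by
  have h : x - c ≠ 0 := sub_ne_zero.mpr hx
  exact pow_pos (norm_pos_iff.mpr h) 2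

variable (hc : ‖c‖ < 1) (hx : x ≠ c)
include hc hx

lemma retr_disc_pos : 0 < ⟪c, x - c⟫ ^ 2 + ‖x - c‖ ^ 2 * (1 - ‖c‖ ^ 2) := by
  have hA := retr_A_pos (c := c) (x := x) hx
  have h1 : ‖c‖ ^ 2 < 1 := by nlinarith [norm_nonneg c]
  nlinarith [sq_nonneg (⟪c, x - c⟫ : ℝ)]

lemma retr_AS : ‖x - c‖ ^ 2 * retrScale c x =
    -(⟪c, x - c⟫) + Real.sqrt (⟪c, x - c⟫ ^ 2 + ‖x - c‖ ^ 2 * (1 - ‖c‖ ^ 2)) := by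
  have hA := retr_A_pos (c := c) (x := x) hx
  rw [retrScale]
  have hn : ‖x - c‖ ≠ 0 := norm_ne_zero_iff.mpr (sub_ne_zero.mpr hx)
  field_simp

lemma retr_root : ‖c + retrScale c x • (x - c)‖ ^ 2 = 1 := by
  have hA := retr_A_pos (c := c) (x := x) hx
  have hd := retr_disc_pos (c := c) (x := x) hc hx
  have hAS := retr_AS (c := c) (x := x) hc hx
  have hsq : Real.sqrt (⟪c, x - c⟫ ^ 2 + ‖x - c‖ ^ 2 * (1 - ‖c‖ ^ 2)) ^ 2
      = ⟪c, x - c⟫ ^ 2 + ‖x - c‖ ^ 2 * (1 - ‖c‖ ^ 2) := Real.sq_sqrt hd.le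
  rw [retr_normsq]
  have key : ‖x - c‖ ^ 2 * (‖x - c‖ ^ 2 * retrScale c x ^ 2 + 2 * ⟪c, x - c⟫ * retrScale c x
      + ‖c‖ ^ 2 - 1) = 0 := by
    linear_combination (‖x - c‖ ^ 2 * retrScale c x + ⟪c, x - c⟫ +
      Real.sqrt (⟪c, x - c⟫ ^ 2 + ‖x - c‖ ^ 2 * (1 - ‖c‖ ^ 2))) * hAS + hsq
  rcases mul_eq_zero.mp key with h | h
  · exact absurd h hA.ne'
  · linarith

lemma retr_norm_one : ‖c + retrScale c x • (x - c)‖ = 1 := by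
  have h := retr_root (c := c) (x := x) hc hx
  nlinarith [norm_nonneg (c + retrScale c x • (x - c))]

lemma retr_one_le (hx1 : ‖x‖ ≤ 1) : 1 ≤ retrScale c x := by
  have hA := retr_A_pos (c := c) (x := x) hx
  have hAS := retr_AS (c := c) (x := x) hc hx
  have hxc : c + (1 : ℝ) • (x - c) = x := by module
  have hf1 : ‖x - c‖ ^ 2 + 2 * ⟪c, x - c⟫ + ‖c‖ ^ 2 ≤ 1 := by
    have h := retr_normsq (c := c) (x := x) 1
    rw [hxc] at h
    nlinarith [norm_nonneg x]
  have hsqle : (‖x - c‖ ^ 2 + ⟪c, x - c⟫) ^ 2 ≤ ⟪c, x - c⟫ ^ 2 + ‖x - c‖ ^ 2 * (1 - ‖c‖ ^ 2) := by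
    nlinarith
  have hle : ‖x - c‖ ^ 2 + ⟪c, x - c⟫ ≤
      Real.sqrt (⟪c, x - c⟫ ^ 2 + ‖x - c‖ ^ 2 * (1 - ‖c‖ ^ 2)) := by
    calc ‖x - c‖ ^ 2 + ⟪c, x - c⟫ ≤ |‖x - c‖ ^ 2 + ⟪c, x - c⟫| := le_abs_self _
    _ = Real.sqrt ((‖x - c‖ ^ 2 + ⟪c, x - c⟫) ^ 2) := (Real.sqrt_sq_eq_abs _).symm
    _ ≤ _ := Real.sqrt_le_sqrt hsqle
  rw [retrScale, le_div_iff₀ hA]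
  linarith

lemma retr_eq_one (hx1 : ‖x‖ = 1) : retrScale c x = 1 := by
  have hA := retr_A_pos (c := c) (x := x) hx
  have hAS := retr_AS (c := c) (x := x) hc hx
  have hxc : c + (1 : ℝ) • (x - c) = x := by module
  have hf1 : ‖x - c‖ ^ 2 + 2 * ⟪c, x - c⟫ + ‖c‖ ^ 2 = 1 := by
    have h := retr_normsq (c := c) (x := x) 1
    rw [hxc, hx1] at h
    nlinarith
  have hABpos : 0 < ‖x - c‖ ^ 2 + ⟪c, x - c⟫ := by
    have h1 : ‖x - c‖ ^ 2 + ⟪c, x - c⟫ = ‖x‖ ^ 2 - ⟪x, c⟫ := by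
      rw [norm_sub_sq_real, inner_sub_right, real_inner_comm c x,
        real_inner_self_eq_norm_sq]
      ring
    have h2 : ⟪x, c⟫ ≤ ‖x‖ * ‖c‖ := real_inner_le_norm x c
    rw [h1, hx1]
    nlinarith
  have hdisc : ⟪c, x - c⟫ ^ 2 + ‖x - c‖ ^ 2 * (1 - ‖c‖ ^ 2)
      = (‖x - c‖ ^ 2 + ⟪c, x - c⟫) ^ 2 := by nlinarith
  rw [hdisc, Real.sqrt_sq hABpos.le] at hAS
  have : ‖x - c‖ ^ 2 * retrScale c x = ‖x - c‖ ^ 2 * 1 := by linarith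
  exact mul_left_cancel₀ hA.ne' this

lemma retr_norm_le {l : ℝ} (hl0 : 0 ≤ l) (hls : l ≤ retrScale c x)
    (hS1 : 1 ≤ retrScale c x) :
    ‖c + l • (x - c)‖ ≤ 1 := by
  set S := retrScale c x with hS
  have hSpos : 0 < S := lt_of_lt_of_le one_pos hS1
  have hy : ‖c + S • (x - c)‖ = 1 := retr_norm_one hc hx
  have hdec : c + l • (x - c) = (1 - l / S) • c + (l / S) • (c + S • (x - c)) := by
    match_scalars <;> field_simp <;> ring
  have hd1 : l / S ≤ 1 := (div_le_one hSpos).mpr hls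
  have hd0 : 0 ≤ l / S := div_nonneg hl0 hSpos.le
  calc ‖c + l • (x - c)‖ ≤ ‖(1 - l / S) • c‖ + ‖(l / S) • (c + S • (x - c))‖ := by
        rw [hdec]; exact norm_add_le _ _
    _ = (1 - l / S) * ‖c‖ + (l / S) * 1 := by
        rw [norm_smul, norm_smul, Real.norm_eq_abs, Real.norm_eq_abs, hy,
          abs_of_nonneg (by linarith), abs_of_nonneg hd0]
    _ ≤ 1 := by nlinarith [norm_nonneg c, hc.le]

end

lemma retr_continuousOn {E : Type*} [NormedAddCommGroup E] [InnerProductSpace ℝ E] (c : E) :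
    ContinuousOn (retrScale c) {x : E | x ≠ c} := by
  apply ContinuousOn.div
  · apply Continuous.continuousOn
    apply Continuous.add
    · exact (Continuous.inner continuous_const (continuous_id.sub continuous_const)).neg
    · exact Real.continuous_sqrt.comp
        (((Continuous.inner continuous_const (continuous_id.sub continuous_const)).pow 2).add
          (((continuous_id.sub continuous_const).norm.pow 2).mul continuous_const))
  · fun_prop
  · intro x hx
    exact (retr_A_pos (c := c) (x := x) hx).ne'



/-- If `C` is a nonempty convex subset of the open unit ball of a finite-dimensional
real inner product space `E`, then the unit sphere is a deformation retract of
`closedBall 0 1 \ C`; in particular these two spaces are homotopy equivalent. -/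
theorem sphere_deformation_retract_of_closedBall_diff_convex
    {E : Type*} [NormedAddCommGroup E] [InnerProductSpace ℝ E] [FiniteDimensional ℝ E]
    (C : Set E) (hne : C.Nonempty) (hconv : Convex ℝ C)
    (hsub : C ⊆ Metric.ball (0 : E) 1) :
    (∃ H : ↥(Metric.closedBall (0 : E) 1 \ C) × unitInterval →
        ↥(Metric.closedBall (0 : E) 1 \ C),
      Continuous H ∧
      (∀ x : ↥(Metric.closedBall (0 : E) 1 \ C), H (x, 0) = x) ∧
      (∀ x : ↥(Metric.closedBall (0 : E) 1 \ C),
        (H (x, 1) : E) ∈ Metric.sphere (0 : E) 1) ∧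
      (∀ x : ↥(Metric.closedBall (0 : E) 1 \ C),
        (x : E) ∈ Metric.sphere (0 : E) 1 → H (x, 1) = x)) ∧
    Nonempty (ContinuousMap.HomotopyEquiv
      ↥(Metric.closedBall (0 : E) 1 \ C) ↥(Metric.sphere (0 : E) 1)) := by
  classical
  obtain ⟨c, hcC⟩ := hne
  have hc1 : ‖c‖ < 1 := by simpa using hsub hcC
  set D : Set E := Metric.closedBall (0 : E) 1 \ C with hD
  -- basic facts about points of D
  have hxD_norm : ∀ x : E, x ∈ D → ‖x‖ ≤ 1 := fun x hx => by
    simpa using hx.1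
  have hxD_ne : ∀ x : E, x ∈ D → x ≠ c := fun x hx h => hx.2 (h ▸ hcC)
  -- the scale function restricted
  have hS1 : ∀ x : E, x ∈ D → 1 ≤ retrScale c x := fun x hx =>
    retr_one_le hc1 (hxD_ne x hx) (hxD_norm x hx)
  -- membership of points on the ray
  have hray_mem : ∀ (x : E), x ∈ D → ∀ l : ℝ, 1 ≤ l → l ≤ retrScale c x →
      c + l • (x - c) ∈ D := by
    intro x hx l hl1 hls
    constructor
    · rw [Metric.mem_closedBall, dist_zero_right]
      exact retr_norm_le hc1 (hxD_ne x hx) (by linarith) hls (hS1 x hx)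
    · intro hmem
      have hl0 : l ≠ 0 := by linarith
      have hrep : (1 / l) • (c + l • (x - c)) + (1 - 1 / l) • c = x := by
        match_scalars <;> field_simp <;> ring
      have : x ∈ C := by
        rw [← hrep]
        exact hconv hmem hcC (by positivity) (by
          rw [sub_nonneg]
          exact div_le_one_of_le₀ hl1 (by linarith)) (by ring)
      exact hx.2 this
  -- the homotopy, as a map to E
  set G : ↥D × unitInterval → E :=
    fun p => c + (1 + (p.2 : ℝ) * (retrScale c (p.1 : E) - 1)) • ((p.1 : E) - c) with hG
  have hlam : ∀ p : ↥D × unitInterval,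
      1 ≤ 1 + (p.2 : ℝ) * (retrScale c (p.1 : E) - 1) ∧
      1 + (p.2 : ℝ) * (retrScale c (p.1 : E) - 1) ≤ retrScale c (p.1 : E) := by
    rintro ⟨x, t⟩
    have h1 := hS1 x x.2
    have ht0 := t.2.1
    have ht1 := t.2.2
    constructor <;> nlinarith
  have hGmem : ∀ p : ↥D × unitInterval, G p ∈ D := fun p =>
    hray_mem p.1 p.1.2 _ (hlam p).1 (hlam p).2
  -- continuity
  have hScont : Continuous fun p : ↥D × unitInterval => retrScale c (p.1 : E) := by
    apply (retr_continuousOn c).comp_continuous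
      (continuous_subtype_val.comp continuous_fst)
    exact fun p => hxD_ne _ p.1.2
  have hGcont : Continuous G := by
    apply continuous_const.add
    apply Continuous.smul
    · exact continuous_const.add
        ((continuous_subtype_val.comp continuous_snd).mul (hScont.sub continuous_const))
    · exact (continuous_subtype_val.comp continuous_fst).sub continuous_const
  set H : ↥D × unitInterval → ↥D := fun p => ⟨G p, hGmem p⟩ with hH
  have hHcont : Continuous H := hGcont.subtype_mk _
  -- endpoint properties
  have hH0 : ∀ x : ↥D, H (x, 0) = x := by
    intro x
    apply Subtype.ext
    show c + (1 + ((0 : unitInterval) : ℝ) * _) • ((x : E) - c) = (x : E)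
    push_cast
    module
  have hH1 : ∀ x : ↥D, (H (x, 1) : E) ∈ Metric.sphere (0 : E) 1 := by
    intro x
    rw [mem_sphere_zero_iff_norm]
    show ‖c + (1 + ((1 : unitInterval) : ℝ) * (retrScale c (x : E) - 1)) • ((x : E) - c)‖ = 1
    have h : (1 + ((1 : unitInterval) : ℝ) * (retrScale c (x : E) - 1)) = retrScale c (x : E) := by
      push_cast; ring
    rw [h]
    exact retr_norm_one hc1 (hxD_ne _ x.2)
  have hHfix : ∀ x : ↥D, (x : E) ∈ Metric.sphere (0 : E) 1 → H (x, 1) = x := by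
    intro x hx
    apply Subtype.ext
    show c + (1 + ((1 : unitInterval) : ℝ) * (retrScale c (x : E) - 1)) • ((x : E) - c) = (x : E)
    rw [retr_eq_one hc1 (hxD_ne _ x.2) (mem_sphere_zero_iff_norm.mp hx)]
    push_cast
    module
  refine ⟨⟨H, hHcont, hH0, hH1, hHfix⟩, ?_⟩
  -- homotopy equivalence
  have hsphD : ∀ y : E, y ∈ Metric.sphere (0 : E) 1 → y ∈ D := by
    intro y hy
    refine ⟨Metric.sphere_subset_closedBall hy, fun hyC => ?_⟩
    have := hsub hyC
    rw [Metric.mem_ball, dist_zero_right] at this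
    rw [mem_sphere_zero_iff_norm] at hy
    linarith
  set incl : C(↥(Metric.sphere (0 : E) 1), ↥D) :=
    ⟨fun y => ⟨(y : E), hsphD _ y.2⟩, (continuous_subtype_val).subtype_mk _⟩ with hincl
  set r : C(↥D, ↥(Metric.sphere (0 : E) 1)) :=
    ⟨fun x => ⟨(H (x, 1) : E), hH1 x⟩,
      ((hHcont.comp (continuous_id.prodMk continuous_const)).subtype_val).subtype_mk _⟩ with hr
  have hri : r.comp incl = ContinuousMap.id _ := by
    ext y
    show (H (incl y, 1) : E) = ((incl y : ↥D) : E)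
    exact congrArg Subtype.val (hHfix (incl y) y.2)
  have hFhom : (ContinuousMap.id ↥D).Homotopic (incl.comp r) := by
    refine ⟨⟨⟨fun p => H (p.2, p.1),
      hHcont.comp (continuous_snd.prodMk continuous_fst)⟩, fun x => hH0 x, fun x => ?_⟩⟩
    exact Subtype.ext rfl
  exact ⟨⟨r, incl, hFhom.symm, hri ▸ (ContinuousMap.Homotopic.refl _)⟩⟩
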